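/- Given distinct nodes x̂₁, …, x̂_N ∈ ℝ^d, real data g ∈ ℝ^N, and a point x ∈ ℝ^d, define for every ε ∈ ℂ with A(ε) invertible the Gaussian RBF interpolant s(x, ε) = Σ_{i=1}^N λ_i(ε) exp(−ε²‖x − x̂_i‖²), where λ(ε) = A(ε)^{-1} g. Then whenever A(ε) is invertible, so are A(−ε), A(conj(ε)) and A(−conj(ε)), and the interpolant satisfies the symmetry relations s(x, ε) = s(x, −ε) = conj(s(x, conj(ε))) = conj(s(x, −conj(ε))). -/
import Mathlib


open Matrix

/-- For distinct nodes `x̂᾿ᵢ ∈ ℝ^d`, real data `g` and an evaluation point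
`x`, the Gaussian RBF interpolant `s(x,ε) = Σᵢ λᵢ(ε) exp(−ε²‖x−x̂ᵢ‖²)` with
`λ(ε) = A(ε)⁻¹ g` satisfies: whenever `A(ε)` is invertible so are `A(−ε)`, `A(conj ε)` and
`A(−conj ε)`, and `s(x,ε) = s(x,−ε) = conj(s(x, conj ε)) = conj(s(x, −conj ε))`. -/
theorem stmt3 {N d : ℕ} (x : Fin N → EuclideanSpace ℝ (Fin d))
    (hx : Function.Injective x) (g : Fin N → ℝ) (p : EuclideanSpace ℝ (Fin d))
    (A : ℂ → Matrix (Fin N) (Fin N) ℂ)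
    (hA : ∀ ε i j, A ε i j = Complex.exp (-(ε ^ 2 * (‖x i - x j‖ : ℂ) ^ 2)))
    (lam : ℂ → Fin N → ℂ)
    (hlam : ∀ ε, lam ε = (A ε)⁻¹.mulVec fun i => (g i : ℂ))
    (s : EuclideanSpace ℝ (Fin d) → ℂ → ℂ)
    (hs : ∀ q ε, s q ε = ∑ i, lam ε i * Complex.exp (-(ε ^ 2 * (‖q - x i‖ : ℂ) ^ 2)))
    (ε : ℂ) (hinv : IsUnit (A ε).det) :
    IsUnit (A (-ε)).det ∧ IsUnit (A (starRingEnd ℂ ε)).det ∧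
    IsUnit (A (-(starRingEnd ℂ ε))).det ∧
    s p ε = s p (-ε) ∧
    s p ε = starRingEnd ℂ (s p (starRingEnd ℂ ε)) ∧
    s p ε = starRingEnd ℂ (s p (-(starRingEnd ℂ ε))) := by
  have hAneg : ∀ e : ℂ, A (-e) = A e := by
    intro e; ext i j; rw [hA, hA, neg_sq]
  have hAconj : ∀ e : ℂ, A (starRingEnd ℂ e) = (A e).map (starRingEnd ℂ) := by
    intro e; ext i j
    rw [hA, Matrix.map_apply, hA, ← Complex.exp_conj]
    congr 1
    simp [map_pow, Complex.conj_ofReal]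
  have hdetconj : IsUnit (A (starRingEnd ℂ ε)).det := by
    rw [hAconj, show (A ε).map (starRingEnd ℂ) = (starRingEnd ℂ).mapMatrix (A ε) from rfl,
      ← RingHom.map_det]
    exact hinv.map (starRingEnd ℂ)
  have hBinv : (A (starRingEnd ℂ ε))⁻¹ = (A ε)⁻¹.map (starRingEnd ℂ) := by
    apply Matrix.inv_eq_right_inv
    rw [hAconj, ← Matrix.map_mul, Matrix.mul_nonsing_inv _ hinv, Matrix.map_one]
    · exact map_zero _
    · exact map_one _
  have hlc : ∀ i, lam (starRingEnd ℂ ε) i = starRingEnd ℂ (lam ε i) := by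
    intro i
    rw [hlam, hlam, hBinv]
    simp [Matrix.mulVec, dotProduct, Matrix.map_apply, map_sum, Complex.conj_ofReal]
  have hsneg : ∀ e : ℂ, s p (-e) = s p e := by
    intro e
    rw [hs, hs]
    refine Finset.sum_congr rfl fun i _ => ?_
    rw [hlam, hAneg, ← hlam, neg_sq]
  have hsconj : s p (starRingEnd ℂ ε) = starRingEnd ℂ (s p ε) := by
    rw [hs, hs, map_sum]
    refine Finset.sum_congr rfl fun i _ => ?_
    rw [hlc, _root_.map_mul, ← Complex.exp_conj]
    congr 2
    simp [map_pow, Complex.conj_ofReal]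
  refine ⟨by rw [hAneg]; exact hinv, hdetconj, by rw [hAneg]; exact hdetconj, ?_, ?_, ?_⟩
  · rw [hsneg]
  · rw [hsconj, Complex.conj_conj]
  · rw [hsneg, hsconj, Complex.conj_conj]
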